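/- Let Γ be a decorated fat graph that is the edge-disjoint union of two standard cycles α = (x₁,...,xₙ) and β = (y₁,...,yₙ), each vertex having degree 4. The curve α is separating on the closed surface obtained from Γ if and only if, for every i, the directed edges yᵢ and yᵢ⁻¹ appear in the same column of the normal matrix M(α,β). -/

import Mathlib

/-- Directed edges of a decorated fat graph which is the edge-disjoint union of two
standard cycles `α = (x₁,…,xₙ)` and `β = (y₁,…,yₙ)`:
`(false, i, true) = xᵢ`, `(false, i, false) = xᵢ⁻¹`,
`(true, i, true) = yᵢ`, `(true, i, false) = yᵢ⁻¹` (indices in `Fin n`). -/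
abbrev DirEdge (n : ℕ) := Bool × Fin n × Bool

/-- The fixed-point-free involution `σ₁`, reversing each directed edge. -/
def rev {n : ℕ} : Equiv.Perm (DirEdge n) :=
  Function.Involutive.toPerm (fun e => (e.1, e.2.1, !e.2.2)) (fun e => by simp)

/-- **Theorem 3.2 (classification of standard cycles).**
Let `Γ` be a decorated fat graph which is the edge-disjoint union of two standard
cycles `α = (x₁,…,xₙ)` and `β = (y₁,…,yₙ)`, every vertex having degree 4.  The vertex
`vᵢ` (initial vertex of `xᵢ`) carries the cyclic order `(xᵢ, c₂ i, xᵢ₋₁⁻¹, c₄ i)`,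
which is the `i`-th row of the normal matrix `M(α,β)`; the functions
`c₂, c₄ : Fin n → Fin n × Bool` record the directed `y`-edges occupying columns 2
and 4.  Cutting the resulting closed surface along `α ∪ β` yields polygons
corresponding to the cycles of `σ₀⁻¹σ₁`; the curve `α` is *separating* iff when the
polygons are glued back along the `y`-edges only (each `yᵢ` to `yᵢ⁻¹`), the result
stays disconnected, i.e. the equivalence generated by "same cycle of `σ₀⁻¹σ₁`" and
"`y`-edge glued to its reverse" has more than one class.

The theorem: `α` is separating iff for every `i`, the edges `yᵢ` and `yᵢ⁻¹` lie in the
same column of `M(α,β)`. -/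
theorem separating_iff_same_column (n : ℕ) (hn : 1 < n)
    (c₂ c₄ : Fin n → Fin n × Bool)
    -- the entries of columns 2 and 4 exhaust all 2n directed y-edges
    (hcover : Function.Bijective fun s : Fin n × Bool =>
      if s.2 then c₂ s.1 else c₄ s.1)
    -- β = (y₁,…,yₙ) is a standard cycle: at each vertex the two opposite y-entries
    -- are consecutive edges of β, oppositely directed
    (hstd : ∀ i : Fin n, ∃ j : Fin n,
      (c₂ i = (j + ⟨1, hn⟩, true) ∧ c₄ i = (j, false)) ∨
      (c₂ i = (j, false) ∧ c₄ i = (j + ⟨1, hn⟩, true)))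
    (σ₀ : Equiv.Perm (DirEdge n))
    -- σ₀ realizes the rows (xᵢ, c₂ i, xᵢ₋₁⁻¹, c₄ i) of the normal matrix
    (hσ₀ : ∀ i : Fin n,
      σ₀ (false, i, true) = (true, (c₂ i).1, (c₂ i).2) ∧
      σ₀ (true, (c₂ i).1, (c₂ i).2) = (false, i - ⟨1, hn⟩, false) ∧
      σ₀ (false, i - ⟨1, hn⟩, false) = (true, (c₄ i).1, (c₄ i).2) ∧
      σ₀ (true, (c₄ i).1, (c₄ i).2) = (false, i, true)) :
    (¬ ∀ e f : DirEdge n,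
        Relation.EqvGen
          (fun a b => (σ₀⁻¹ * rev).SameCycle a b ∨ (a.1 = true ∧ b = rev a)) e f) ↔
      (∀ i : Fin n, (∃ r, c₂ r = (i, true)) ↔ (∃ r, c₂ r = (i, false))) := by
  classical
  haveI : NeZero n := ⟨by omega⟩
  letI : CommRing (Fin n) := Fin.instCommRing n
  have h1 : (⟨1, hn⟩ : Fin n) = 1 := by
    ext; simp [Fin.val_one', Nat.mod_eq_of_lt hn]
  simp only [h1] at hσ₀
  set σ : Equiv.Perm (DirEdge n) := σ₀⁻¹ * rev with hσdef
  set R : DirEdge n → DirEdge n → Prop :=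
    fun a b => σ.SameCycle a b ∨ (a.1 = true ∧ b = rev a) with hRdef
  set E : DirEdge n → DirEdge n → Prop := Relation.EqvGen R with hEdef
  -- basic consequences of hcover
  have hdisj : ∀ r i : Fin n, c₂ r ≠ c₄ i := by
    intro r i h
    have := hcover.1 (a₁ := (r, true)) (a₂ := (i, false)) (by simpa using h)
    simp at this
  have hsurj : ∀ p : Fin n × Bool, (∃ r, c₂ r = p) ∨ (∃ r, c₄ r = p) := by
    intro p
    rcases hcover.2 p with ⟨⟨r, b⟩, hs⟩
    cases b
    · exact Or.inr ⟨r, by simpa using hs⟩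
    · exact Or.inl ⟨r, by simpa using hs⟩
  -- values of σ₀⁻¹
  have inv₀ : ∀ a b : DirEdge n, σ₀ a = b → σ₀⁻¹ b = a := by
    intro a b h; rw [← h]; exact σ₀.symm_apply_apply a
  have hσrev : ∀ x : DirEdge n, σ (rev x) = σ₀⁻¹ x := by
    intro x
    show σ₀⁻¹ (x.1, x.2.1, !!x.2.2) = σ₀⁻¹ x
    rw [Bool.not_not]
  -- values of σ
  have S1 : ∀ i : Fin n, σ (false, i, true) = (true, (c₂ (i+1)).1, (c₂ (i+1)).2) := by
    intro i
    have h := (hσ₀ (i+1)).2.1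
    rw [add_sub_cancel_right] at h
    exact inv₀ _ _ h
  have S2 : ∀ i : Fin n, σ (false, i, false) = (true, (c₄ i).1, (c₄ i).2) := by
    intro i
    exact inv₀ _ _ (hσ₀ i).2.2.2
  have S3 : ∀ i : Fin n, σ (rev (true, (c₂ i).1, (c₂ i).2)) = (false, i, true) := by
    intro i
    exact (hσrev _).trans (inv₀ _ _ (hσ₀ i).1)
  have S4 : ∀ i : Fin n, σ (rev (true, (c₄ i).1, (c₄ i).2)) = (false, i - 1, false) := by
    intro i
    exact (hσrev _).trans (inv₀ _ _ (hσ₀ i).2.2.1)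
  -- E is an equivalence; basic moves
  have Etrans : ∀ {a b c : DirEdge n}, E a b → E b c → E a c :=
    fun h1 h2 => Relation.EqvGen.trans _ _ _ h1 h2
  have Esymm : ∀ {a b : DirEdge n}, E a b → E b a :=
    fun h => Relation.EqvGen.symm _ _ h
  have Erefl : ∀ a : DirEdge n, E a a := fun a => Relation.EqvGen.refl a
  have Estep : ∀ a : DirEdge n, E a (σ a) :=
    fun a => Relation.EqvGen.rel _ _ (Or.inl ⟨1, by simp⟩)
  have Eglue : ∀ (j : Fin n) (b : Bool), E (true, j, b) (true, j, !b) :=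
    fun j b => Relation.EqvGen.rel _ _ (Or.inr ⟨rfl, rfl⟩)
  -- connections
  have C2 : ∀ i : Fin n, E (true, (c₂ i).1, (c₂ i).2) (false, i, true) := by
    intro i
    have h := Estep (rev (true, (c₂ i).1, (c₂ i).2))
    rw [S3 i] at h
    exact Etrans (Eglue (c₂ i).1 (c₂ i).2) h
  have D2 : ∀ i : Fin n, E (true, (c₄ i).1, (c₄ i).2) (false, i - 1, false) := by
    intro i
    have h := Estep (rev (true, (c₄ i).1, (c₄ i).2))
    rw [S4 i] at h
    exact Etrans (Eglue (c₄ i).1 (c₄ i).2) h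
  have chainP : ∀ i : Fin n, E (false, i, true) (false, i + 1, true) := by
    intro i
    have h := Estep (false, i, true)
    rw [S1 i] at h
    exact Etrans h (C2 (i+1))
  have chainM : ∀ i : Fin n, E (false, i, false) (false, i - 1, false) := by
    intro i
    have h := Estep (false, i, false)
    rw [S2 i] at h
    exact Etrans h (D2 i)
  have castlem : ∀ m : ℕ, ((m+1 : ℕ) : Fin n) = (m : Fin n) + 1 := by
    intro m; push_cast; ring
  have xP : ∀ i : Fin n, E (false, 0, true) (false, i, true) := by
    have key : ∀ m : ℕ, E (false, (0:Fin n), true) (false, (m : Fin n), true) := by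
      intro m
      induction m with
      | zero => rw [Nat.cast_zero]; exact Erefl _
      | succ m ih =>
        rw [castlem m]
        exact Etrans ih (chainP _)
    intro i
    have h := key i.val
    rwa [Fin.cast_val_eq_self] at h
  have xM : ∀ i : Fin n, E (false, i, false) (false, 0, false) := by
    have key : ∀ m : ℕ, E (false, (m : Fin n), false) (false, (0:Fin n), false) := by
      intro m
      induction m with
      | zero => rw [Nat.cast_zero]; exact Erefl _
      | succ m ih =>
        have h := chainM ((m : Fin n) + 1)
        rw [add_sub_cancel_right] at h
        rw [castlem m]
        exact Etrans h ih
    intro i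
    have h := key i.val
    rwa [Fin.cast_val_eq_self] at h
  have yP : ∀ r : Fin n, E (true, (c₂ r).1, (c₂ r).2) (false, 0, true) :=
    fun r => Etrans (C2 r) (Esymm (xP r))
  have yM : ∀ r : Fin n, E (true, (c₄ r).1, (c₄ r).2) (false, 0, false) :=
    fun r => Etrans (D2 r) (xM (r - 1))
  constructor
  · -- separating → same columns
    intro hsep
    by_contra hcol
    rw [not_forall] at hcol
    obtain ⟨j₀, hj⟩ := hcol
    apply hsep
    have merge : E (false, 0, true) (false, 0, false) := by
      by_cases hP : ∃ r, c₂ r = (j₀, true)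
      · have hQ : ¬ ∃ r, c₂ r = (j₀, false) := fun q => hj ⟨fun _ => q, fun _ => hP⟩
        obtain ⟨a, ha⟩ := hP
        have hb : ∃ r, c₄ r = (j₀, false) := (hsurj (j₀, false)).resolve_left hQ
        obtain ⟨b, hb⟩ := hb
        have t1 : E (true, j₀, true) (false, 0, true) := by
          have h := yP a; rw [ha] at h; exact h
        have t2 : E (true, j₀, false) (false, 0, false) := by
          have h := yM b; rw [hb] at h; exact h
        exact Etrans (Esymm t1) (Etrans (Eglue j₀ true) t2)
      · have hQ : ∃ r, c₂ r = (j₀, false) := by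
          by_contra hq; exact hj ⟨fun p => absurd p hP, fun q => absurd q hq⟩
        obtain ⟨a, ha⟩ := hQ
        have hb : ∃ r, c₄ r = (j₀, true) := (hsurj (j₀, true)).resolve_left hP
        obtain ⟨b, hb⟩ := hb
        have t1 : E (true, j₀, false) (false, 0, true) := by
          have h := yP a; rw [ha] at h; exact h
        have t2 : E (true, j₀, true) (false, 0, false) := by
          have h := yM b; rw [hb] at h; exact h
        exact Etrans (Esymm t1) (Etrans (Eglue j₀ false) t2)
    have toBase : ∀ e : DirEdge n, E e (false, 0, true) := by
      rintro ⟨x, j, b⟩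
      cases x
      · cases b
        · exact Etrans (xM j) (Esymm merge)
        · exact Esymm (xP j)
      · rcases hsurj (j, b) with ⟨r, hr⟩ | ⟨r, hr⟩
        · have h := yP r; rw [hr] at h; exact h
        · have h := yM r; rw [hr] at h; exact Etrans h (Esymm merge)
    exact fun e f => Etrans (toBase e) (Esymm (toBase f))
  · -- same columns → separating
    intro hcol hall
    set col : DirEdge n → Bool :=
      fun e => if e.1 then decide (∃ r, c₂ r = e.2) else e.2.2 with hcoldef
    have colσ : ∀ a : DirEdge n, col (σ a) = col a := by
      rintro ⟨x, j, b⟩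
      cases x
      · cases b
        · rw [S2 j]
          show decide (∃ r, c₂ r = ((c₄ j).1, (c₄ j).2)) = false
          simp only [decide_eq_false_iff_not]
          rintro ⟨r, hr⟩
          exact hdisj r j hr
        · rw [S1 j]
          show decide (∃ r, c₂ r = ((c₂ (j+1)).1, (c₂ (j+1)).2)) = true
          simp only [decide_eq_true_eq]
          exact ⟨j + 1, rfl⟩
      · cases b
        · -- a = (true, j, false); look at (j, true)
          rcases hsurj (j, true) with ⟨i, hi⟩ | ⟨i, hi⟩
          · have h := S3 i; rw [hi] at h
            rw [show σ ((true, j, false) : DirEdge n) = (false, i, true) from h]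
            show true = decide (∃ r, c₂ r = (j, false))
            symm
            simp only [decide_eq_true_eq]
            exact (hcol j).mp ⟨i, hi⟩
          · have h := S4 i; rw [hi] at h
            rw [show σ ((true, j, false) : DirEdge n) = (false, i - 1, false) from h]
            show false = decide (∃ r, c₂ r = (j, false))
            symm
            simp only [decide_eq_false_iff_not]
            rintro ⟨r, hr⟩
            have : ∃ r, c₂ r = (j, true) := (hcol j).mpr ⟨r, hr⟩
            obtain ⟨s, hs⟩ := this
            exact hdisj s i (hs.trans hi.symm)
        · rcases hsurj (j, false) with ⟨i, hi⟩ | ⟨i, hi⟩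
          · have h := S3 i; rw [hi] at h
            rw [show σ ((true, j, true) : DirEdge n) = (false, i, true) from h]
            show true = decide (∃ r, c₂ r = (j, true))
            symm
            simp only [decide_eq_true_eq]
            exact (hcol j).mpr ⟨i, hi⟩
          · have h := S4 i; rw [hi] at h
            rw [show σ ((true, j, true) : DirEdge n) = (false, i - 1, false) from h]
            show false = decide (∃ r, c₂ r = (j, true))
            symm
            simp only [decide_eq_false_iff_not]
            rintro ⟨r, hr⟩
            have : ∃ r, c₂ r = (j, false) := (hcol j).mp ⟨r, hr⟩
            obtain ⟨s, hs⟩ := this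
            exact hdisj s i (hs.trans hi.symm)
    have colN : ∀ (m : ℕ) (a : DirEdge n), col ((σ ^ m) a) = col a := by
      intro m
      induction m with
      | zero => intro a; simp
      | succ m ih =>
        intro a
        rw [pow_succ, Equiv.Perm.mul_apply, ih, colσ]
    have colZ : ∀ (k : ℤ) (a : DirEdge n), col ((σ ^ k) a) = col a := by
      intro k a
      rcases k with m | m
      · rw [Int.ofNat_eq_coe, zpow_natCast]; exact colN m a
      · rw [zpow_negSucc]
        have h := colN (m+1) ((σ ^ (m+1))⁻¹ a)
        rw [← Equiv.Perm.mul_apply, mul_inv_cancel, Equiv.Perm.one_apply] at h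
        exact h.symm
    have colR : ∀ a b : DirEdge n, R a b → col a = col b := by
      rintro a b (⟨k, hk⟩ | ⟨hx, hb⟩)
      · rw [← hk]; exact (colZ k a).symm
      · rcases a with ⟨x, j, b'⟩
        cases x
        · exact absurd hx (by simp)
        · rw [hb]
          show decide (∃ r, c₂ r = (j, b')) = decide (∃ r, c₂ r = (j, !b'))
          cases b'
          · exact decide_eq_decide.mpr (hcol j).symm
          · exact decide_eq_decide.mpr (hcol j)
    have colE : ∀ a b : DirEdge n, E a b → col a = col b := by
      intro a b h
      induction h with
      | rel a b h => exact colR a b h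
      | refl a => rfl
      | symm a b _ ih => exact ih.symm
      | trans a b c _ _ ih1 ih2 => exact ih1.trans ih2
    have hcon := colE _ _ (hall (false, 0, true) (false, 0, false))
    have : (true : Bool) = false := hcon
    exact Bool.noConfusion this
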